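/- Let a > b > 0 be real numbers and let (F_n)_{n≥0} be the sequence of continuous functions on [0,1] defined by F₀(x) = 1 and F_n = a·L*(F_{n-1}) + b·L(F_{n-1}) for n ≥ 1. Then there exists t₀ > 0 such that for all real t with |t| < t₀ and all x ∈ [0,1], the series Σ_{n=0}^∞ F_n(x)·tⁿ converges absolutely and Σ_{n=0}^∞ F_n(x)·tⁿ = (a−b)·e^{(a−b)tx} / (a − b·e^{(a−b)t}). -/

import Mathlib

open MeasureTheory Set

private lemma int_exp {k : ℝ} (hk : k ≠ 0) (p q : ℝ) :
    ∫ u in p..q, Real.exp (k * u) = (Real.exp (k * q) - Real.exp (k * p)) / k := by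
  have h : ∀ u : ℝ, Real.exp (k * u) = Real.exp (u * k) := fun u => by rw [mul_comm]
  simp_rw [h]
  rw [intervalIntegral.integral_comp_mul_right Real.exp hk, integral_exp, smul_eq_mul,
    mul_comm q k, mul_comm p k]
  ring

private lemma swap_tsum_integral (f : ℕ → ℝ → ℝ) (M : ℕ → ℝ)
    (hcont : ∀ n, ContinuousOn (f n) (Set.Icc 0 1))
    (hM : Summable M)
    (hbound : ∀ n, ∀ x ∈ Set.Icc (0:ℝ) 1, |f n x| ≤ M n)
    {p q : ℝ} (hp : 0 ≤ p) (hpq : p ≤ q) (hq : q ≤ 1) :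
    ∫ u in p..q, (∑' n, f n u) = ∑' n, ∫ u in p..q, f n u := by
  have hsub : Set.Ioc p q ⊆ Set.Icc (0:ℝ) 1 := fun x hx => ⟨hp.trans hx.1.le, hx.2.trans hq⟩
  have hsub' : Set.Icc p q ⊆ Set.Icc (0:ℝ) 1 := fun x hx => ⟨hp.trans hx.1, hx.2.trans hq⟩
  have hint : ∀ n, IntegrableOn (f n) (Set.Ioc p q) := fun n =>
    (((hcont n).mono hsub').integrableOn_Icc).mono_set Set.Ioc_subset_Icc_self
  have hμ : (volume (Set.Ioc p q)).toReal = q - p := by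
    rw [Real.volume_Ioc, ENNReal.toReal_ofReal (by linarith)]
  have hMnn : ∀ n, 0 ≤ M n := fun n =>
    (abs_nonneg _).trans (hbound n p ⟨hp, hpq.trans hq⟩)
  have hnorm : ∀ n, ∫ u in Set.Ioc p q, ‖f n u‖ ≤ M n := by
    intro n
    have h1 : ∫ u in Set.Ioc p q, ‖f n u‖ ≤ ∫ _u in Set.Ioc p q, M n := by
      refine setIntegral_mono_on (hint n).norm
        (integrableOn_const measure_Ioc_lt_top.ne) measurableSet_Ioc ?_
      intro x hx
      rw [Real.norm_eq_abs]
      exact hbound n x (hsub hx)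
    rw [setIntegral_const, measureReal_def, hμ, smul_eq_mul] at h1
    nlinarith [hMnn n]
  have hsum : Summable fun n => ∫ u in Set.Ioc p q, ‖f n u‖ :=
    hM.of_nonneg_of_le (fun n => integral_nonneg fun u => norm_nonneg _) hnorm
  simp only [intervalIntegral.integral_of_le hpq]
  exact (MeasureTheory.integral_tsum_of_summable_integral_norm hint hsum).symm

private lemma uniq_zero (a b t : ℝ) (ha : 0 < a) (hba : b ≤ a) (hb : 0 ≤ b)
    (hta : |t| * a < 1) (d : ℝ → ℝ) (hd : ContinuousOn d (Set.Icc 0 1))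
    (heq : ∀ x ∈ Set.Icc (0:ℝ) 1,
      d x = t * (a * ∫ u in (0:ℝ)..x, d u) + t * (b * ∫ u in x..(1:ℝ), d u)) :
    ∀ x ∈ Set.Icc (0:ℝ) 1, d x = 0 := by
  obtain ⟨x₀, hx₀, hmax⟩ := isCompact_Icc.exists_isMaxOn (Set.nonempty_Icc.2 zero_le_one) hd.norm
  set M := ‖d x₀‖ with hMdef
  have hM0 : 0 ≤ M := norm_nonneg _
  have hle : ∀ x ∈ Set.Icc (0:ℝ) 1, |d x| ≤ M := fun x hx => hmax hx
  obtain ⟨h0, h1⟩ := hx₀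
  have e1 : |∫ u in (0:ℝ)..x₀, d u| ≤ M * x₀ := by
    have := intervalIntegral.norm_integral_le_of_norm_le_const (C := M) (f := d)
      (a := 0) (b := x₀) ?_
    · simpa [abs_of_nonneg h0] using this
    · intro x hx
      rw [Set.uIoc_of_le h0] at hx
      exact hle x ⟨hx.1.le, hx.2.trans h1⟩
  have e2 : |∫ u in x₀..(1:ℝ), d u| ≤ M * (1 - x₀) := by
    have := intervalIntegral.norm_integral_le_of_norm_le_const (C := M) (f := d)
      (a := x₀) (b := 1) ?_
    · simpa [abs_of_nonneg (by linarith : (0:ℝ) ≤ 1 - x₀)] using this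
    · intro x hx
      rw [Set.uIoc_of_le h1] at hx
      exact hle x ⟨h0.trans hx.1.le, hx.2⟩
  have key : M ≤ |t| * a * M := by
    have hd₀ := heq x₀ ⟨h0, h1⟩
    have habs : |d x₀| ≤ |t| * (a * |∫ u in (0:ℝ)..x₀, d u|)
        + |t| * (b * |∫ u in x₀..(1:ℝ), d u|) := by
      rw [hd₀]
      calc |t * (a * ∫ u in (0:ℝ)..x₀, d u) + t * (b * ∫ u in x₀..(1:ℝ), d u)|
          ≤ |t * (a * ∫ u in (0:ℝ)..x₀, d u)| + |t * (b * ∫ u in x₀..(1:ℝ), d u)| :=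
            abs_add_le _ _
        _ = |t| * (a * |∫ u in (0:ℝ)..x₀, d u|) + |t| * (b * |∫ u in x₀..(1:ℝ), d u|) := by
            rw [abs_mul, abs_mul, abs_mul, abs_mul, abs_of_nonneg ha.le, abs_of_nonneg hb]
    have s1 := mul_le_mul_of_nonneg_left e1 ha.le
    have s2 := mul_le_mul_of_nonneg_left e2 hb
    have s3 : a * (M * x₀) + b * (M * (1 - x₀)) ≤ a * M := by
      nlinarith [mul_nonneg (mul_nonneg (sub_nonneg.2 hba) hM0) (sub_nonneg.2 h1)]
    have h5 : a * |∫ u in (0:ℝ)..x₀, d u| + b * |∫ u in x₀..(1:ℝ), d u| ≤ a * M := by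
      linarith
    have s4 : |t| * (a * |∫ u in (0:ℝ)..x₀, d u|) + |t| * (b * |∫ u in x₀..(1:ℝ), d u|)
        ≤ |t| * (a * M) := by
      calc |t| * (a * |∫ u in (0:ℝ)..x₀, d u|) + |t| * (b * |∫ u in x₀..(1:ℝ), d u|)
          = |t| * (a * |∫ u in (0:ℝ)..x₀, d u| + b * |∫ u in x₀..(1:ℝ), d u|) := by ring
        _ ≤ |t| * (a * M) := mul_le_mul_of_nonneg_left h5 (abs_nonneg t)
    have hMd : M = |d x₀| := Real.norm_eq_abs _
    nlinarith
  have hMzero : M = 0 := by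
    by_contra hne
    have hMpos : 0 < M := lt_of_le_of_ne hM0 (Ne.symm hne)
    have := mul_lt_mul_of_pos_right hta hMpos
    rw [one_mul] at this
    linarith
  intro x hx
  have := hle x hx
  rw [hMzero] at this
  exact abs_eq_zero.mp (le_antisymm this (abs_nonneg _))

theorem moment_generating_function_S (a b : ℝ) (hb : 0 < b) (hab : b < a)
    (F : ℕ → ℝ → ℝ)
    (hFcont : ∀ n, ContinuousOn (F n) (Set.Icc 0 1))
    (hF0 : ∀ x ∈ Set.Icc (0:ℝ) 1, F 0 x = 1)
    (hFrec : ∀ n, ∀ x ∈ Set.Icc (0:ℝ) 1,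
      F (n + 1) x = a * (∫ t in (0:ℝ)..x, F n t) + b * ∫ t in x..(1:ℝ), F n t) :
    ∃ t₀ : ℝ, 0 < t₀ ∧ ∀ t : ℝ, |t| < t₀ → ∀ x ∈ Set.Icc (0:ℝ) 1,
      Summable (fun n : ℕ => |F n x * t ^ n|) ∧
      ∑' n : ℕ, F n x * t ^ n =
        (a - b) * Real.exp ((a - b) * t * x) / (a - b * Real.exp ((a - b) * t)) := by
  have ha : 0 < a := hb.trans hab
  have hc : 0 < a - b := by linarith
  have hlog : 0 < Real.log (a / b) := Real.log_pos ((one_lt_div hb).2 hab)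
  refine ⟨min (1 / (2 * a)) (Real.log (a / b) / (2 * (a - b))),
    lt_min (by positivity) (by positivity), ?_⟩
  intro t ht
  -- basic smallness facts
  have hta : |t| * a < 1 / 2 := by
    have h2 : |t| < 1 / (2 * a) := lt_of_lt_of_le ht (min_le_left _ _)
    rw [lt_div_iff₀ (by positivity)] at h2
    nlinarith
  have hta1 : |t| * a < 1 := by linarith
  -- the denominator is positive
  have hD : 0 < a - b * Real.exp ((a - b) * t) := by
    have h2 : |t| < Real.log (a / b) / (2 * (a - b)) := lt_of_lt_of_le ht (min_le_right _ _)
    rw [lt_div_iff₀ (by positivity)] at h2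
    have h3 : t ≤ |t| := le_abs_self t
    have h1 : (a - b) * t < Real.log (a / b) := by nlinarith
    have hexp : Real.exp ((a - b) * t) < a / b := by
      rw [← Real.exp_log (by positivity : 0 < a / b)]
      exact Real.exp_lt_exp.2 h1
    have hba : b * (a / b) = a := by field_simp
    nlinarith
  -- uniform bound on F n
  have hFb : ∀ n, ∀ x ∈ Set.Icc (0:ℝ) 1, |F n x| ≤ a ^ n := by
    intro n
    induction n with
    | zero => intro x hx; rw [hF0 x hx]; simp
    | succ n ih =>
      intro x hx
      obtain ⟨h0, h1⟩ := hx
      rw [hFrec n x ⟨h0, h1⟩]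
      have e1 : |∫ u in (0:ℝ)..x, F n u| ≤ a ^ n * x := by
        have := intervalIntegral.norm_integral_le_of_norm_le_const (C := a ^ n) (f := F n)
          (a := 0) (b := x) ?_
        · simpa [abs_of_nonneg h0] using this
        · intro u hu
          rw [Set.uIoc_of_le h0] at hu
          exact ih u ⟨hu.1.le, hu.2.trans h1⟩
      have e2 : |∫ u in x..(1:ℝ), F n u| ≤ a ^ n * (1 - x) := by
        have := intervalIntegral.norm_integral_le_of_norm_le_const (C := a ^ n) (f := F n)
          (a := x) (b := 1) ?_
        · simpa [abs_of_nonneg (by linarith : (0:ℝ) ≤ 1 - x)] using this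
        · intro u hu
          rw [Set.uIoc_of_le h1] at hu
          exact ih u ⟨h0.trans hu.1.le, hu.2⟩
      have habs : |a * (∫ u in (0:ℝ)..x, F n u) + b * ∫ u in x..(1:ℝ), F n u|
          ≤ a * |∫ u in (0:ℝ)..x, F n u| + b * |∫ u in x..(1:ℝ), F n u| := by
        calc |a * (∫ u in (0:ℝ)..x, F n u) + b * ∫ u in x..(1:ℝ), F n u|
            ≤ |a * ∫ u in (0:ℝ)..x, F n u| + |b * ∫ u in x..(1:ℝ), F n u| := abs_add_le _ _
          _ = a * |∫ u in (0:ℝ)..x, F n u| + b * |∫ u in x..(1:ℝ), F n u| := by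
              rw [abs_mul, abs_mul, abs_of_nonneg ha.le, abs_of_nonneg hb.le]
      have hpow : (0:ℝ) ≤ a ^ n := by positivity
      have hkey : a * (a ^ n * x) + b * (a ^ n * (1 - x)) ≤ a ^ (n + 1) := by
        rw [pow_succ]
        nlinarith [mul_nonneg (mul_nonneg (sub_nonneg.2 hab.le) hpow) (sub_nonneg.2 h1)]
      have s1 := mul_le_mul_of_nonneg_left e1 ha.le
      have s2 := mul_le_mul_of_nonneg_left e2 hb.le
      linarith
  -- geometric comparison series
  have hgeo : Summable (fun n : ℕ => (a * |t|) ^ n) :=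
    summable_geometric_of_lt_one (by positivity) (by nlinarith)
  have hterm : ∀ n, ∀ x ∈ Set.Icc (0:ℝ) 1, |F n x * t ^ n| ≤ (a * |t|) ^ n := by
    intro n x hx
    rw [abs_mul, abs_pow, mul_pow]
    exact mul_le_mul_of_nonneg_right (hFb n x hx) (by positivity)
  have hS : ∀ x ∈ Set.Icc (0:ℝ) 1, Summable (fun n : ℕ => |F n x * t ^ n|) := by
    intro x hx
    exact hgeo.of_nonneg_of_le (fun n => abs_nonneg _) (fun n => hterm n x hx)
  -- the sum function
  set g : ℝ → ℝ := fun x => ∑' n : ℕ, F n x * t ^ n with hgdef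
  have hgcont : ContinuousOn g (Set.Icc 0 1) := by
    refine continuousOn_tsum (fun n => (hFcont n).mul continuousOn_const) hgeo ?_
    intro n x hx
    rw [Real.norm_eq_abs]
    exact hterm n x hx
  -- the target function
  set h : ℝ → ℝ := fun x =>
    (a - b) * Real.exp ((a - b) * t * x) / (a - b * Real.exp ((a - b) * t)) with hhdef
  have hhcont : Continuous h := by
    apply Continuous.div_const
    exact continuous_const.mul (Real.continuous_exp.comp (by continuity))
  -- the integral equation for g
  have hgeq : ∀ x ∈ Set.Icc (0:ℝ) 1, g x =
      1 + (t * (a * ∫ u in (0:ℝ)..x, g u) + t * (b * ∫ u in x..(1:ℝ), g u)) := by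
    intro x hx
    obtain ⟨h0, h1⟩ := hx
    have hs : Summable (fun n : ℕ => F n x * t ^ n) := (hS x ⟨h0, h1⟩).of_abs
    have e1 : ∀ n, |∫ u in (0:ℝ)..x, F n u| ≤ a ^ n := by
      intro n
      have := intervalIntegral.norm_integral_le_of_norm_le_const (C := a ^ n) (f := F n)
        (a := 0) (b := x) ?_
      · have hpow : (0:ℝ) ≤ a ^ n := by positivity
        rw [Real.norm_eq_abs, sub_zero, abs_of_nonneg h0] at this
        have h6 := mul_le_mul_of_nonneg_left h1 hpow
        linarith
      · intro u hu
        rw [Set.uIoc_of_le h0] at hu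
        exact hFb n u ⟨hu.1.le, hu.2.trans h1⟩
    have e2 : ∀ n, |∫ u in x..(1:ℝ), F n u| ≤ a ^ n := by
      intro n
      have := intervalIntegral.norm_integral_le_of_norm_le_const (C := a ^ n) (f := F n)
        (a := x) (b := 1) ?_
      · have hpow : (0:ℝ) ≤ a ^ n := by positivity
        rw [Real.norm_eq_abs, abs_of_nonneg (by linarith : (0:ℝ) ≤ 1 - x)] at this
        have h6 := mul_le_mul_of_nonneg_left (by linarith : 1 - x ≤ 1) hpow
        linarith
      · intro u hu
        rw [Set.uIoc_of_le h1] at hu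
        exact hFb n u ⟨h0.trans hu.1.le, hu.2⟩
    have hA : Summable (fun n : ℕ => (∫ u in (0:ℝ)..x, F n u) * t ^ n) := by
      apply Summable.of_abs
      refine hgeo.of_nonneg_of_le (fun n => abs_nonneg _) ?_
      intro n
      rw [abs_mul, abs_pow, mul_pow]
      exact mul_le_mul_of_nonneg_right (e1 n) (by positivity)
    have hB : Summable (fun n : ℕ => (∫ u in x..(1:ℝ), F n u) * t ^ n) := by
      apply Summable.of_abs
      refine hgeo.of_nonneg_of_le (fun n => abs_nonneg _) ?_
      intro n
      rw [abs_mul, abs_pow, mul_pow]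
      exact mul_le_mul_of_nonneg_right (e2 n) (by positivity)
    have hswapA : ∑' n : ℕ, (∫ u in (0:ℝ)..x, F n u) * t ^ n = ∫ u in (0:ℝ)..x, g u := by
      have := swap_tsum_integral (fun n u => F n u * t ^ n) (fun n => (a * |t|) ^ n)
        (fun n => (hFcont n).mul continuousOn_const) hgeo hterm le_rfl h0 h1
      rw [hgdef]
      rw [this]
      congr 1
      funext n
      rw [← intervalIntegral.integral_mul_const]
    have hswapB : ∑' n : ℕ, (∫ u in x..(1:ℝ), F n u) * t ^ n = ∫ u in x..(1:ℝ), g u := by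
      have := swap_tsum_integral (fun n u => F n u * t ^ n) (fun n => (a * |t|) ^ n)
        (fun n => (hFcont n).mul continuousOn_const) hgeo hterm h0 h1 le_rfl
      rw [hgdef]
      rw [this]
      congr 1
      funext n
      rw [← intervalIntegral.integral_mul_const]
    have hrec' : ∀ n : ℕ, F (n + 1) x * t ^ (n + 1) =
        t * (a * ((∫ u in (0:ℝ)..x, F n u) * t ^ n))
        + t * (b * ((∫ u in x..(1:ℝ), F n u) * t ^ n)) := by
      intro n
      rw [hFrec n x ⟨h0, h1⟩, pow_succ]
      ring
    calc g x = F 0 x * t ^ 0 + ∑' n : ℕ, F (n + 1) x * t ^ (n + 1) := hs.tsum_eq_zero_add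
      _ = 1 + ∑' n : ℕ, (t * (a * ((∫ u in (0:ℝ)..x, F n u) * t ^ n))
            + t * (b * ((∫ u in x..(1:ℝ), F n u) * t ^ n))) := by
          rw [hF0 x ⟨h0, h1⟩, pow_zero, one_mul]
          congr 1
          exact tsum_congr hrec'
      _ = 1 + (t * (a * ∑' n : ℕ, (∫ u in (0:ℝ)..x, F n u) * t ^ n)
            + t * (b * ∑' n : ℕ, (∫ u in x..(1:ℝ), F n u) * t ^ n)) := by
          rw [Summable.tsum_add ((hA.mul_left a).mul_left t) ((hB.mul_left b).mul_left t),
            tsum_mul_left, tsum_mul_left, tsum_mul_left, tsum_mul_left]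
      _ = 1 + (t * (a * ∫ u in (0:ℝ)..x, g u) + t * (b * ∫ u in x..(1:ℝ), g u)) := by
          rw [hswapA, hswapB]
  -- the integral equation for h
  have hheq : ∀ x ∈ Set.Icc (0:ℝ) 1, h x =
      1 + (t * (a * ∫ u in (0:ℝ)..x, h u) + t * (b * ∫ u in x..(1:ℝ), h u)) := by
    intro x _hx
    by_cases ht0 : t = 0
    · simp only [hhdef, ht0, mul_zero, zero_mul, Real.exp_zero, mul_one, add_zero, zero_add]
      field_simp
    · have hk : (a - b) * t ≠ 0 := mul_ne_zero hc.ne' ht0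
      have hI1 : ∫ u in (0:ℝ)..x, h u =
          ((a - b) / (a - b * Real.exp ((a - b) * t)))
            * ((Real.exp ((a - b) * t * x) - 1) / ((a - b) * t)) := by
        rw [hhdef]
        simp only [mul_div_assoc]
        rw [intervalIntegral.integral_const_mul]
        have : ∀ u : ℝ, Real.exp ((a - b) * t * u) / (a - b * Real.exp ((a - b) * t))
            = (1 / (a - b * Real.exp ((a - b) * t))) * Real.exp (((a - b) * t) * u) := by
          intro u; rw [mul_assoc]; ring
        simp_rw [this]
        rw [intervalIntegral.integral_const_mul, int_exp hk, mul_zero, Real.exp_zero]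
        ring
      have hI2 : ∫ u in x..(1:ℝ), h u =
          ((a - b) / (a - b * Real.exp ((a - b) * t)))
            * ((Real.exp ((a - b) * t) - Real.exp ((a - b) * t * x)) / ((a - b) * t)) := by
        rw [hhdef]
        simp only [mul_div_assoc]
        rw [intervalIntegral.integral_const_mul]
        have : ∀ u : ℝ, Real.exp ((a - b) * t * u) / (a - b * Real.exp ((a - b) * t))
            = (1 / (a - b * Real.exp ((a - b) * t))) * Real.exp (((a - b) * t) * u) := by
          intro u; rw [mul_assoc]; ring
        simp_rw [this]
        rw [intervalIntegral.integral_const_mul, int_exp hk, mul_one]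
        ring
      rw [hI1, hI2, hhdef]
      field_simp
      ring
  -- uniqueness: g = h on [0,1]
  have hgint : ∀ x ∈ Set.Icc (0:ℝ) 1, IntervalIntegrable g volume 0 x ∧
      IntervalIntegrable g volume x 1 := by
    intro x hx
    obtain ⟨h0, h1⟩ := hx
    constructor
    · exact (hgcont.mono (by rw [Set.uIcc_of_le h0]; exact Set.Icc_subset_Icc le_rfl h1)).intervalIntegrable
    · exact (hgcont.mono (by rw [Set.uIcc_of_le h1]; exact Set.Icc_subset_Icc h0 le_rfl)).intervalIntegrable
  have hdeq : ∀ x ∈ Set.Icc (0:ℝ) 1, g x - h x =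
      t * (a * ∫ u in (0:ℝ)..x, (g u - h u)) + t * (b * ∫ u in x..(1:ℝ), (g u - h u)) := by
    intro x hx
    obtain ⟨hg1, hg2⟩ := hgint x hx
    have hh1 : IntervalIntegrable h volume 0 x := hhcont.intervalIntegrable _ _
    have hh2 : IntervalIntegrable h volume x 1 := hhcont.intervalIntegrable _ _
    rw [intervalIntegral.integral_sub hg1 hh1, intervalIntegral.integral_sub hg2 hh2,
      hgeq x hx, hheq x hx]
    ring
  have hzero := uniq_zero a b t ha hab.le hb.le (by linarith [hta1] : |t| * a < 1)
    (fun u => g u - h u) (hgcont.sub hhcont.continuousOn) hdeq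
  intro x hx
  refine ⟨hS x hx, ?_⟩
  have hz : g x - h x = 0 := hzero x hx
  have hgx : g x = h x := by linarith
  exact hgx
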